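/- Let E be a real Hilbert space, f : ℝ → E twice continuously differentiable, t ∈ ℝ and τ > 0. Then ‖(f(t+τ) + f(t))/2 − f(t + τ/2)‖² ≤ τ³ · ∫_t^{t+τ} ‖f''(s)‖² ds. -/

import Mathlib

open MeasureTheory Set

lemma taylor2_aux {E : Type*} [NormedAddCommGroup E] [NormedSpace ℝ E]
    [CompleteSpace E]
    (f : ℝ → E) (hf : ContDiff ℝ 2 f) (x y : ℝ) :
    ∫ s in x..y, (y - s) • iteratedDeriv 2 f s
      = f y - f x - (y - x) • deriv f x := by
  have hd1 : Differentiable ℝ (deriv f) := by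
    have := hf.differentiable_iteratedDeriv 1 (by norm_num)
    rwa [iteratedDeriv_one] at this
  have hder : ∀ s, HasDerivAt (fun u => f u + (y - u) • deriv f u)
      ((y - s) • iteratedDeriv 2 f s) s := by
    intro s
    have h1 : HasDerivAt f (deriv f s) s :=
      (hf.differentiable (by norm_num) s).hasDerivAt
    have h2 : HasDerivAt (deriv f) (deriv (deriv f) s) s := (hd1 s).hasDerivAt
    have h3 : HasDerivAt (fun u : ℝ => y - u) (-1) s := by
      simpa using (hasDerivAt_id s).const_sub y
    have h5 := h1.add (h3.smul h2)
    convert h5 using 1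
    · rfl
    rw [iteratedDeriv_succ, iteratedDeriv_one]
    module
  have hcont : Continuous fun s => (y - s) • iteratedDeriv 2 f s :=
    (continuous_const.sub continuous_id).smul (hf.continuous_iteratedDeriv 2 le_rfl)
  have h := intervalIntegral.integral_eq_sub_of_hasDerivAt (fun s _ => hder s)
    (hcont.intervalIntegrable x y)
  rw [h]
  simp
  module

lemma cs_aux {a b : ℝ} (hab : a ≤ b) {g : ℝ → ℝ} (hg : Continuous g)
    (hgn : ∀ x, 0 ≤ g x) :
    (∫ s in a..b, g s) ^ 2 ≤ (b - a) * ∫ s in a..b, (g s) ^ 2 := by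
  have hμ : IsFiniteMeasure (volume.restrict (Ioc a b)) :=
    ⟨by rw [Measure.restrict_apply_univ]; exact measure_Ioc_lt_top⟩
  obtain ⟨C, hC⟩ := isCompact_Icc.exists_bound_of_continuousOn (hg.continuousOn (s := Icc a b))
  have hmem : MemLp g (ENNReal.ofReal 2) (volume.restrict (Ioc a b)) := by
    refine MemLp.of_bound hg.aestronglyMeasurable C ?_
    filter_upwards [ae_restrict_mem measurableSet_Ioc] with x hx
    exact hC x (Ioc_subset_Icc_self hx)
  have hone : MemLp (fun _ : ℝ => (1:ℝ)) (ENNReal.ofReal 2) (volume.restrict (Ioc a b)) :=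
    memLp_const 1
  have hpq : Real.HolderConjugate 2 2 := Real.HolderConjugate.two_two
  have h := integral_mul_le_Lp_mul_Lq_of_nonneg (μ := volume.restrict (Ioc a b)) hpq
    (f := g) (g := fun _ => (1:ℝ)) (Filter.Eventually.of_forall hgn)
    (Filter.Eventually.of_forall fun _ => zero_le_one) hmem hone
  simp only [mul_one, Real.rpow_two, one_pow] at h
  rw [intervalIntegral.integral_of_le hab, intervalIntegral.integral_of_le hab]
  have hvol : (∫ _ in Ioc a b, (1:ℝ)) = b - a := by
    simp [Real.volume_Ioc, ENNReal.toReal_ofReal (by linarith : (0:ℝ) ≤ b - a), hab]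
  rw [hvol] at h
  have hA : 0 ≤ ∫ s in Ioc a b, (g s)^2 :=
    integral_nonneg fun s => sq_nonneg _
  have hB : (0:ℝ) ≤ b - a := by linarith
  have h2 : ((∫ s in Ioc a b, (g s)^2) ^ ((1:ℝ)/2)) ^ 2 = ∫ s in Ioc a b, (g s)^2 := by
    rw [← Real.rpow_natCast _ 2, ← Real.rpow_mul hA]; norm_num
  have h3 : ((b - a) ^ ((1:ℝ)/2)) ^ 2 = b - a := by
    rw [← Real.rpow_natCast _ 2, ← Real.rpow_mul hB]; norm_num
  have hI : 0 ≤ ∫ s in Ioc a b, g s := integral_nonneg fun s => hgn s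
  calc (∫ s in Ioc a b, g s)^2
      ≤ ((∫ s in Ioc a b, (g s)^2) ^ ((1:ℝ)/2) * (b - a) ^ ((1:ℝ)/2))^2 :=
        pow_le_pow_left₀ hI h 2
    _ = (b - a) * ∫ s in Ioc a b, (g s)^2 := by rw [mul_pow, h2, h3]; ring

/-- Truncation error bound for the Crank–Nicolson midpoint average, for a
Hilbert-space-valued function. -/
theorem crank_nicolson_midpoint_average_truncation_error
    {E : Type*} [NormedAddCommGroup E] [InnerProductSpace ℝ E] [CompleteSpace E]
    (f : ℝ → E) (hf : ContDiff ℝ 2 f) (t τ : ℝ) (hτ : 0 < τ) :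
    ‖(2:ℝ)⁻¹ • (f (t + τ) + f t) - f (t + τ/2)‖^2 ≤
      τ^3 * ∫ s in t..(t + τ), ‖iteratedDeriv 2 f s‖^2 := by
  set d2 := iteratedDeriv 2 f with hd2
  set a := t
  set b := t + τ with hb
  set m := t + τ/2 with hm
  have ham : a ≤ m := by rw [hm]; linarith
  have hmb : m ≤ b := by rw [hm, hb]; linarith
  have hab : a ≤ b := le_trans ham hmb
  have hI1 := taylor2_aux f hf m b
  have hI2 := taylor2_aux f hf m a
  have hdcont : Continuous d2 := hf.continuous_iteratedDeriv 2 le_rfl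
  have hncont : Continuous fun s => ‖d2 s‖ := hdcont.norm
  -- the algebraic identity
  have hE : (2:ℝ)⁻¹ • (f b + f a) - f m
      = (2:ℝ)⁻¹ • ((∫ s in m..b, (b - s) • d2 s) + (∫ s in m..a, (a - s) • d2 s)) := by
    rw [hI1, hI2]
    have h1 : b - m = τ/2 := by rw [hb, hm]; ring
    have h2 : a - m = -(τ/2) := by rw [hm]; ring
    rw [h1, h2]
    module
  -- norm bound for first integral
  have hB1 : ‖∫ s in m..b, (b - s) • d2 s‖ ≤ τ/2 * ∫ s in m..b, ‖d2 s‖ := by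
    calc ‖∫ s in m..b, (b - s) • d2 s‖
        ≤ ∫ s in m..b, ‖(b - s) • d2 s‖ :=
          intervalIntegral.norm_integral_le_integral_norm hmb
      _ ≤ ∫ s in m..b, τ/2 * ‖d2 s‖ := by
          apply intervalIntegral.integral_mono_on hmb
          · exact (((continuous_const.sub continuous_id).smul hdcont).norm).intervalIntegrable _ _
          · exact (continuous_const.mul hncont).intervalIntegrable _ _
          · intro s hs
            rw [norm_smul, Real.norm_eq_abs]
            have : |b - s| ≤ τ/2 := by
              rw [abs_le]; constructor <;>
                [skip; skip] <;> simp only [hb, hm] at hs ⊢ <;>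
                [linarith [hs.1, hs.2]; linarith [hs.1, hs.2]]
            exact mul_le_mul_of_nonneg_right this (norm_nonneg _)
      _ = τ/2 * ∫ s in m..b, ‖d2 s‖ := by
          rw [← intervalIntegral.integral_const_mul]
  have hB2 : ‖∫ s in m..a, (a - s) • d2 s‖ ≤ τ/2 * ∫ s in a..m, ‖d2 s‖ := by
    rw [intervalIntegral.integral_symm, norm_neg]
    calc ‖∫ s in a..m, (a - s) • d2 s‖
        ≤ ∫ s in a..m, ‖(a - s) • d2 s‖ :=
          intervalIntegral.norm_integral_le_integral_norm ham
      _ ≤ ∫ s in a..m, τ/2 * ‖d2 s‖ := by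
          apply intervalIntegral.integral_mono_on ham
          · exact (((continuous_const.sub continuous_id).smul hdcont).norm).intervalIntegrable _ _
          · exact (continuous_const.mul hncont).intervalIntegrable _ _
          · intro s hs
            rw [norm_smul, Real.norm_eq_abs]
            have : |a - s| ≤ τ/2 := by
              rw [abs_le]; constructor <;>
                simp only [hm] at hs ⊢ <;> [linarith [hs.1, hs.2]; linarith [hs.1, hs.2]]
            exact mul_le_mul_of_nonneg_right this (norm_nonneg _)
      _ = τ/2 * ∫ s in a..m, ‖d2 s‖ := by
          rw [← intervalIntegral.integral_const_mul]
  have hsplit : (∫ s in a..m, ‖d2 s‖) + ∫ s in m..b, ‖d2 s‖ = ∫ s in a..b, ‖d2 s‖ :=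
    intervalIntegral.integral_add_adjacent_intervals
      (hncont.intervalIntegrable _ _) (hncont.intervalIntegrable _ _)
  have hEn : ‖(2:ℝ)⁻¹ • (f b + f a) - f m‖ ≤ τ/4 * ∫ s in a..b, ‖d2 s‖ := by
    rw [hE]
    rw [norm_smul]
    have : ‖(2:ℝ)⁻¹‖ = (2:ℝ)⁻¹ := by norm_num
    rw [this]
    have := norm_add_le (∫ s in m..b, (b - s) • d2 s) (∫ s in m..a, (a - s) • d2 s)
    have hsum : ‖(∫ s in m..b, (b - s) • d2 s) + ∫ s in m..a, (a - s) • d2 s‖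
        ≤ τ/2 * ∫ s in a..b, ‖d2 s‖ := by
      calc ‖(∫ s in m..b, (b - s) • d2 s) + ∫ s in m..a, (a - s) • d2 s‖
          ≤ ‖∫ s in m..b, (b - s) • d2 s‖ + ‖∫ s in m..a, (a - s) • d2 s‖ := this
        _ ≤ τ/2 * (∫ s in m..b, ‖d2 s‖) + τ/2 * ∫ s in a..m, ‖d2 s‖ := add_le_add hB1 hB2
        _ = τ/2 * ∫ s in a..b, ‖d2 s‖ := by rw [← hsplit]; ring
    calc (2:ℝ)⁻¹ * ‖(∫ s in m..b, (b - s) • d2 s) + ∫ s in m..a, (a - s) • d2 s‖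
        ≤ (2:ℝ)⁻¹ * (τ/2 * ∫ s in a..b, ‖d2 s‖) := by
          exact mul_le_mul_of_nonneg_left hsum (by norm_num)
      _ = τ/4 * ∫ s in a..b, ‖d2 s‖ := by ring
  have hcs : (∫ s in a..b, ‖d2 s‖)^2 ≤ τ * ∫ s in a..b, ‖d2 s‖^2 := by
    have := cs_aux hab hncont (fun x => norm_nonneg _)
    rw [show b - a = τ by rw [hb]; ring] at this
    exact this
  have hJ : 0 ≤ ∫ s in a..b, ‖d2 s‖^2 :=
    intervalIntegral.integral_nonneg hab fun s _ => sq_nonneg _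
  have hKn : 0 ≤ ∫ s in a..b, ‖d2 s‖ := intervalIntegral.integral_nonneg hab fun s _ => norm_nonneg _
  have h1 : ‖(2:ℝ)⁻¹ • (f b + f a) - f m‖^2 ≤ (τ/4 * ∫ s in a..b, ‖d2 s‖)^2 :=
    pow_le_pow_left₀ (norm_nonneg _) hEn 2
  have h2 : (τ/4 * ∫ s in a..b, ‖d2 s‖)^2 = τ^2/16 * (∫ s in a..b, ‖d2 s‖)^2 := by ring
  calc ‖(2:ℝ)⁻¹ • (f b + f a) - f m‖^2 ≤ τ^2/16 * (∫ s in a..b, ‖d2 s‖)^2 := by rw [← h2]; exact h1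
    _ ≤ τ^2/16 * (τ * ∫ s in a..b, ‖d2 s‖^2) := by
        exact mul_le_mul_of_nonneg_left hcs (by positivity)
    _ ≤ τ^3 * ∫ s in a..b, ‖d2 s‖^2 := by nlinarith [hJ, hτ]
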